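/- arXiv:2104.02105 — 4 statements merged into one kernel-verified Lean document; each statement's English description precedes it below -/
import Mathlib

section
/- Let A be a symmetric positive definite p×p real matrix and B a symmetric positive semidefinite p×p real matrix. Then the matrix A⁻¹ ⊗ A⁻¹ − (A+B)⁻¹ ⊗ (A+B)⁻¹ (Kronecker product) is positive semidefinite. -/
open Matrix Kronecker

open scoped MatrixOrder in
theorem Matrix.posSemidef_iff_eq_transpose_mul_self {n : Type*} [Fintype n] [DecidableEq n]
    {A : Matrix n n ℝ} : A.PosSemidef ↔ ∃ B : Matrix n n ℝ, A = Bᴴ * B := by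
  constructor
  · intro h
    obtain ⟨B, hB⟩ := CStarAlgebra.nonneg_iff_eq_star_mul_self.mp h.nonneg
    exact ⟨B, hB⟩
  · rintro ⟨B, rfl⟩
    exact Matrix.posSemidef_conjTranspose_mul_self B

lemma psd_kron {p : ℕ} {M N : Matrix (Fin p) (Fin p) ℝ}
    (hM : M.PosSemidef) (hN : N.PosSemidef) : (M ⊗ₖ N).PosSemidef := by
  obtain ⟨C, hC⟩ := Matrix.posSemidef_iff_eq_transpose_mul_self.mp hM
  obtain ⟨D, hD⟩ := Matrix.posSemidef_iff_eq_transpose_mul_self.mp hN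
  refine Matrix.posSemidef_iff_eq_transpose_mul_self.mpr ⟨C ⊗ₖ D, ?_⟩
  rw [hC, hD]
  have : (C ⊗ₖ D)ᴴ = Cᴴ ⊗ₖ Dᴴ := by
    simp only [conjTranspose, ← Matrix.kroneckerMap_transpose]
    ext ⟨i, i'⟩ ⟨j, j'⟩
    simp [Matrix.kroneckerMap_apply]
  rw [this, Matrix.mul_kronecker_mul]

lemma inv_sub_inv_psd {p : ℕ} {A B : Matrix (Fin p) (Fin p) ℝ}
    (hA : A.PosDef) (hB : B.PosSemidef) : (A⁻¹ - (A + B)⁻¹).PosSemidef := by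
  set S := A + B with hS
  have hSpd : S.PosDef := hA.add_posSemidef hB
  have hAinv : A⁻¹.PosSemidef := hA.posSemidef.inv
  have hSinv : S⁻¹.PosSemidef := hSpd.posSemidef.inv
  have hAmul : A⁻¹ * A = 1 := Matrix.nonsing_inv_mul _ (isUnit_iff_ne_zero.mpr hA.det_pos.ne')
  have hSmul : S * S⁻¹ = 1 := Matrix.mul_nonsing_inv _ (isUnit_iff_ne_zero.mpr hSpd.det_pos.ne')
  have hSmul' : S⁻¹ * S = 1 := Matrix.nonsing_inv_mul _ (isUnit_iff_ne_zero.mpr hSpd.det_pos.ne')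
  have hAmul' : A * A⁻¹ = 1 := Matrix.mul_nonsing_inv _ (isUnit_iff_ne_zero.mpr hA.det_pos.ne')
  -- A⁻¹ - S⁻¹ = A⁻¹ B S⁻¹
  have key1 : A⁻¹ - S⁻¹ = A⁻¹ * B * S⁻¹ := by
    have : A⁻¹ * (S - A) * S⁻¹ = A⁻¹ - S⁻¹ := by
      rw [Matrix.mul_sub, Matrix.sub_mul, Matrix.mul_assoc, hSmul, Matrix.mul_one, hAmul,
        Matrix.one_mul]
    rw [← this, hS]
    congr 1
    rw [add_sub_cancel_left]
  have key2 : A⁻¹ - S⁻¹ = S⁻¹ * B * A⁻¹ := by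
    have : S⁻¹ * (S - A) * A⁻¹ = A⁻¹ - S⁻¹ := by
      rw [Matrix.mul_sub, Matrix.sub_mul, hSmul', Matrix.one_mul, Matrix.mul_assoc, hAmul',
        Matrix.mul_one]
    rw [← this, hS]
    congr 1
    rw [add_sub_cancel_left]
  -- A⁻¹ - S⁻¹ = S⁻¹ B S⁻¹ + S⁻¹ B A⁻¹ B S⁻¹
  have key3 : A⁻¹ - S⁻¹ = S⁻¹ * B * S⁻¹ + S⁻¹ * B * A⁻¹ * (B * S⁻¹) := by
    calc A⁻¹ - S⁻¹ = S⁻¹ * B * A⁻¹ := key2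
    _ = S⁻¹ * B * (S⁻¹ + (A⁻¹ - S⁻¹)) := by congr 1; abel
    _ = S⁻¹ * B * (S⁻¹ + A⁻¹ * B * S⁻¹) := by rw [← key1]
    _ = S⁻¹ * B * S⁻¹ + S⁻¹ * B * A⁻¹ * (B * S⁻¹) := by
        rw [Matrix.mul_add]; noncomm_ring
  rw [key3]
  have hSsym : S⁻¹ᴴ = S⁻¹ := hSinv.isHermitian
  have h1 : (S⁻¹ * B * S⁻¹).PosSemidef := by
    have := hB.conjTranspose_mul_mul_same S⁻¹
    rwa [hSsym] at this
  have h2 : (S⁻¹ * B * A⁻¹ * (B * S⁻¹)).PosSemidef := by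
    have := hAinv.conjTranspose_mul_mul_same (B * S⁻¹)
    have he : (B * S⁻¹)ᴴ = S⁻¹ * B := by
      rw [Matrix.conjTranspose_mul, hSsym, hB.isHermitian]
    rwa [he] at this
  exact h1.add h2

theorem kronecker_inv_sub_posSemidef (p : ℕ) (A B : Matrix (Fin p) (Fin p) ℝ)
    (hA : A.PosDef) (hB : B.PosSemidef) :
    (A⁻¹ ⊗ₖ A⁻¹ - (A + B)⁻¹ ⊗ₖ (A + B)⁻¹).PosSemidef := by
  set X := A⁻¹
  set Y := (A + B)⁻¹
  have hX : X.PosSemidef := hA.posSemidef.inv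
  have hY : Y.PosSemidef := (hA.add_posSemidef hB).posSemidef.inv
  have hXY : (X - Y).PosSemidef := inv_sub_inv_psd hA hB
  have hsplit : X ⊗ₖ X - Y ⊗ₖ Y = X ⊗ₖ (X - Y) + (X - Y) ⊗ₖ Y := by
    ext ⟨i, i'⟩ ⟨j, j'⟩
    simp [Matrix.kroneckerMap_apply]
    ring
  rw [hsplit]
  exact (psd_kron hX hXY).add (psd_kron hXY hY)
end

section
/- For any symmetric positive definite p×p matrices A and A+B (with B symmetric positive semidefinite) and any p×p real matrix C, it holds that tr(C⊤(A+B)C(A+B)) − tr(C⊤ A C A) = tr((A+B)^{1/2} C B C⊤ (A+B)^{1/2}) + tr(A^{1/2} C⊤ B C A^{1/2}) ≥ 0. -/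
open Matrix
open scoped MatrixOrder

lemma psd_trace_nonneg {p : ℕ} {M : Matrix (Fin p) (Fin p) ℝ} (hM : M.PosSemidef) :
    0 ≤ M.trace := by
  exact hM.trace_nonneg

lemma cyc2 {p : ℕ} (a b c d : Matrix (Fin p) (Fin p) ℝ) :
    (a * b * c * d).trace = (c * d * a * b).trace := by
  rw [mul_assoc (a * b) c d, Matrix.trace_mul_comm]; simp only [← mul_assoc]

theorem trace_diff_eq_sqrt_traces (p : ℕ) (A B C : Matrix (Fin p) (Fin p) ℝ)
    (hA : A.PosDef) (hB : B.PosSemidef) :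
    ((Cᵀ * (A + B) * C * (A + B)).trace - (Cᵀ * A * C * A).trace =
      (CFC.sqrt (A + B) * C * B * Cᵀ * CFC.sqrt (A + B)).trace +
        (CFC.sqrt A * Cᵀ * B * C * CFC.sqrt A).trace) ∧
    0 ≤ (Cᵀ * (A + B) * C * (A + B)).trace - (Cᵀ * A * C * A).trace := by
  set S := A + B with hS
  have hSpsd := hA.posSemidef.add hB
  have hApsd := hA.posSemidef
  have hSs : CFC.sqrt S * CFC.sqrt S = S := CFC.sqrt_mul_sqrt_self S (Matrix.nonneg_iff_posSemidef.mpr hSpsd)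
  have hAs : CFC.sqrt A * CFC.sqrt A = A := CFC.sqrt_mul_sqrt_self A (Matrix.nonneg_iff_posSemidef.mpr hApsd)
  have hSt : (CFC.sqrt S)ᵀ = CFC.sqrt S :=
    (conjTranspose_eq_transpose_of_trivial _).symm.trans (Matrix.nonneg_iff_posSemidef.mp (CFC.sqrt_nonneg S)).1
  have hAt : (CFC.sqrt A)ᵀ = CFC.sqrt A :=
    (conjTranspose_eq_transpose_of_trivial _).symm.trans (Matrix.nonneg_iff_posSemidef.mp (CFC.sqrt_nonneg A)).1
  have h1 : (CFC.sqrt S * C * B * Cᵀ * CFC.sqrt S).trace = (C * B * Cᵀ * S).trace := by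
    rw [Matrix.trace_mul_comm]
    simp only [← mul_assoc]
    rw [hSs, show S * C * B * Cᵀ = S * (C * B * Cᵀ) by simp [mul_assoc],
      Matrix.trace_mul_comm]
  have h2 : (CFC.sqrt A * Cᵀ * B * C * CFC.sqrt A).trace = (Cᵀ * B * C * A).trace := by
    rw [Matrix.trace_mul_comm]
    simp only [← mul_assoc]
    rw [hAs, show A * Cᵀ * B * C = A * (Cᵀ * B * C) by simp [mul_assoc],
      Matrix.trace_mul_comm]
  have key : (Cᵀ * S * C * S).trace - (Cᵀ * A * C * A).trace =
      (C * B * Cᵀ * S).trace + (Cᵀ * B * C * A).trace := by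
    have e1 : (C * B * Cᵀ * S).trace = (Cᵀ * S * C * B).trace := cyc2 C B Cᵀ S
    rw [e1, hS]
    simp only [mul_add, add_mul, Matrix.trace_add]
    ring
  have hnn1 : 0 ≤ (CFC.sqrt S * C * B * Cᵀ * CFC.sqrt S).trace := by
    apply psd_trace_nonneg
    have := hB.mul_mul_conjTranspose_same (CFC.sqrt S * C)
    simp only [conjTranspose_eq_transpose_of_trivial, transpose_mul, hSt,
      ← mul_assoc] at this
    simpa only [← mul_assoc] using this
  have hnn2 : 0 ≤ (CFC.sqrt A * Cᵀ * B * C * CFC.sqrt A).trace := by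
    apply psd_trace_nonneg
    have := hB.mul_mul_conjTranspose_same (CFC.sqrt A * Cᵀ)
    simp only [conjTranspose_eq_transpose_of_trivial, transpose_mul, hAt,
      transpose_transpose, ← mul_assoc] at this
    simpa only [← mul_assoc] using this
  refine ⟨by rw [key, h1, h2], ?_⟩
  rw [key, ← h1, ← h2]
  exact add_nonneg hnn1 hnn2
end

section
/- Let Ψ be a symmetric positive definite p×p matrix, V symmetric positive semidefinite, n ≥ 1, and let J₂ > 0 satisfy 2nJ₂/(2pn+p²n²) > 0 and 1 + (1/2 − (2pn+p²n²)/(8J₂))pn > 0. With G_p the duplication matrix and A = (Ψ+V)⁻¹, one has det( (G_p⊤G_p)⁻¹ G_p⊤ [ c₁ vec(nA) vec(nA)⊤ + c₂ (A ⊗ A) ] G_p ) = c₂^{p(p+1)/2} (1 + (c₁/c₂) n² p) det(A)^{p+1}, where c₁ = J₂/(2pn+p²n²) − 1/4 and c₂ = 2nJ₂/(2pn+p²n²). -/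
open Matrix Kronecker

/-- Index set for the half-vectorization `vech` of a `p × p` symmetric matrix. -/
abbrev VechIdx (p : ℕ) := {ij : Fin p × Fin p // ij.2 ≤ ij.1}

/-- The duplication matrix `G_p`, satisfying `G_p vech(S) = vec(S)` for symmetric `S`. -/
def dupMatrix (p : ℕ) : Matrix (Fin p × Fin p) (VechIdx p) ℝ :=
  fun ij k => if ij = k.1 ∨ (ij.2, ij.1) = k.1 then 1 else 0

/-- The `vec` operator. -/
def vecOp {p : ℕ} (M : Matrix (Fin p) (Fin p) ℝ) : Fin p × Fin p → ℝ :=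
  fun ij => M ij.1 ij.2

namespace HomoDetAux

variable {p : ℕ}

/-- half-vectorization -/
def vechOp (S : Matrix (Fin p) (Fin p) ℝ) : VechIdx p → ℝ := fun k => S k.1.1 k.1.2

/-- diagonal weights of `Gᵀ G` -/
def wt (p : ℕ) : VechIdx p → ℝ := fun k => if k.1.1 = k.1.2 then 1 else 2

lemma wt_ne_zero (k : VechIdx p) : wt p k ≠ 0 := by
  unfold wt; split <;> norm_num

/-- canonical vech index of a pair -/
def canon (ij : Fin p × Fin p) : VechIdx p :=
  if h : ij.2 ≤ ij.1 then ⟨ij, h⟩ else ⟨(ij.2, ij.1), le_of_not_ge h⟩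

lemma canon_val (k : VechIdx p) : canon k.1 = k := by
  apply Subtype.ext
  rw [canon, dif_pos k.2]

lemma cond_iff (ij : Fin p × Fin p) (k : VechIdx p) :
    (ij = k.1 ∨ (ij.2, ij.1) = k.1) ↔ k = canon ij := by
  constructor
  · rintro (h1 | h1)
    · apply Subtype.ext
      have hle : ij.2 ≤ ij.1 := by rw [h1]; exact k.2
      rw [canon, dif_pos hle, ← h1]
    · by_cases h : ij.2 ≤ ij.1
      · have hle : ij.1 ≤ ij.2 := by
          have := k.2; rw [← h1] at this; exact this
        have hij : ij.1 = ij.2 := le_antisymm hle h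
        apply Subtype.ext
        rw [canon, dif_pos h, ← h1]
        exact Prod.ext hij.symm hij
      · apply Subtype.ext
        rw [canon, dif_neg h, ← h1]
  · rintro rfl
    rw [canon]
    split_ifs with h
    · exact Or.inl rfl
    · exact Or.inr rfl

lemma cond_iff' (ij : Fin p × Fin p) (k : VechIdx p) :
    k = canon ij ↔ (ij = k.1 ∨ ij = (k.1.2, k.1.1)) := by
  rw [← cond_iff]
  constructor
  · rintro (h | h)
    · exact Or.inl h
    · right
      rw [← h]
  · rintro (h | h)
    · exact Or.inl h
    · right
      rw [h]

lemma dup_apply (ij : Fin p × Fin p) (k : VechIdx p) :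
    dupMatrix p ij k = if k = canon ij then 1 else 0 := by
  rw [dupMatrix]
  simp only [cond_iff]

lemma canon_swap (i j : Fin p) : canon (j, i) = canon (i, j) := by
  rcases le_total j i with h | h
  · apply Subtype.ext
    rw [canon, canon, dif_pos h]
    by_cases h' : i ≤ j
    · have : i = j := le_antisymm h' h
      subst this
      rw [dif_pos h]
    · rw [dif_neg h']
  · apply Subtype.ext
    rw [canon, canon, dif_pos h]
    by_cases h' : j ≤ i
    · have : j = i := le_antisymm h' h
      subst this
      rw [dif_pos h']
    · rw [dif_neg h']

/-- symmetric basis matrices -/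
def symBasis (l : VechIdx p) : Matrix (Fin p) (Fin p) ℝ :=
  fun i j => if l = canon (i, j) then 1 else 0

lemma symBasis_sym (l : VechIdx p) : (symBasis l)ᵀ = symBasis l := by
  funext i j
  rw [transpose_apply, symBasis, symBasis, canon_swap]

lemma vechOp_symBasis (l : VechIdx p) : vechOp (symBasis l) = Pi.single l 1 := by
  funext k
  rw [vechOp, symBasis]
  have : ((k.1.1 : Fin p), (k.1.2 : Fin p)) = k.1 := rfl
  rw [this, canon_val, Pi.single_apply]
  simp [eq_comm]

lemma G_mulVec (S : Matrix (Fin p) (Fin p) ℝ) (hS : Sᵀ = S) :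
    dupMatrix p *ᵥ vechOp S = vecOp S := by
  funext ij
  rw [mulVec, dotProduct]
  simp only [dup_apply, ite_mul, one_mul, zero_mul]
  simp only [Finset.sum_ite_eq', Finset.mem_univ, if_true]
  rw [vechOp, vecOp, canon]
  split_ifs with h
  · rfl
  · show S ij.2 ij.1 = S ij.1 ij.2
    exact congrFun (congrFun hS ij.1) ij.2

lemma Gt_mulVec (S : Matrix (Fin p) (Fin p) ℝ) (hS : Sᵀ = S) :
    (dupMatrix p)ᵀ *ᵥ vecOp S = fun k => wt p k * vechOp S k := by
  funext k
  rw [mulVec, dotProduct]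
  simp only [transpose_apply, dup_apply, ite_mul, one_mul, zero_mul]
  have hmem : ∀ ij : Fin p × Fin p,
      (k = canon ij) ↔ ij ∈ ({k.1, (k.1.2, k.1.1)} : Finset (Fin p × Fin p)) := by
    intro ij
    rw [cond_iff']
    simp [Finset.mem_insert, Finset.mem_singleton]
  have : ∑ ij : Fin p × Fin p, (if k = canon ij then vecOp S ij else 0)
      = ∑ ij ∈ ({k.1, (k.1.2, k.1.1)} : Finset (Fin p × Fin p)), vecOp S ij := by
    simp only [hmem]
    rw [Finset.sum_ite_mem, Finset.univ_inter]
  rw [this]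
  by_cases hd : k.1.1 = k.1.2
  · have hpair : ((k.1.2 : Fin p), (k.1.1 : Fin p)) = k.1 := by
      apply Prod.ext
      · exact hd.symm
      · exact hd
    rw [hpair, Finset.pair_eq_singleton, Finset.sum_singleton]
    rw [wt, if_pos hd, one_mul]
    rfl
  · have hne : k.1 ≠ ((k.1.2 : Fin p), (k.1.1 : Fin p)) := by
      intro h
      apply hd
      exact congrArg Prod.fst h
    rw [Finset.sum_pair hne]
    rw [wt, if_neg hd]
    show vecOp S k.1 + vecOp S (k.1.2, k.1.1) = 2 * vechOp S k
    have h2 : vecOp S (k.1.2, k.1.1) = S k.1.2 k.1.1 := rfl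
    have h3 : S k.1.2 k.1.1 = S k.1.1 k.1.2 := congrFun (congrFun hS k.1.1) k.1.2
    rw [h2, h3]
    show S k.1.1 k.1.2 + S k.1.1 k.1.2 = 2 * S k.1.1 k.1.2
    ring

lemma GtG : (dupMatrix p)ᵀ * dupMatrix p = diagonal (wt p) := by
  ext k l
  have hcol : (fun ij => dupMatrix p ij l) = vecOp (symBasis l) := by
    funext ij
    rw [dup_apply, vecOp, symBasis]
  have := congrFun (Gt_mulVec (symBasis l) (symBasis_sym l)) k
  rw [mulVec, dotProduct] at this
  simp only [transpose_apply] at this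
  have heq : ((dupMatrix p)ᵀ * dupMatrix p) k l
      = ∑ ij : Fin p × Fin p, dupMatrix p ij k * vecOp (symBasis l) ij := by
    rw [mul_apply]
    congr 1
    funext ij
    rw [transpose_apply, ← hcol]
  rw [heq, this, vechOp_symBasis, Pi.single_apply, diagonal_apply]
  split_ifs with h <;> ring

lemma GtG_inv :
    ((dupMatrix p)ᵀ * dupMatrix p)⁻¹ = diagonal (fun k => (wt p k)⁻¹) := by
  rw [GtG]
  apply Matrix.inv_eq_right_inv
  have : (fun i : VechIdx p => wt p i * (wt p i)⁻¹) = fun _ : VechIdx p => (1 : ℝ) :=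
    funext fun k => mul_inv_cancel₀ (wt_ne_zero k)
  rw [diagonal_mul_diagonal, this, diagonal_one]

lemma H_mulVec (S : Matrix (Fin p) (Fin p) ℝ) (hS : Sᵀ = S) :
    (((dupMatrix p)ᵀ * dupMatrix p)⁻¹ * (dupMatrix p)ᵀ) *ᵥ vecOp S = vechOp S := by
  rw [← mulVec_mulVec, Gt_mulVec S hS, GtG_inv]
  funext k
  rw [mulVec, dotProduct]
  simp only [diagonal_apply, ite_mul, zero_mul]
  simp only [Finset.sum_ite_eq, Finset.mem_univ, if_true]
  rw [inv_mul_cancel_left₀ (wt_ne_zero k)]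

lemma kron_mulVec (X Y S : Matrix (Fin p) (Fin p) ℝ) :
    (X ⊗ₖ Y) *ᵥ vecOp S = vecOp (X * S * Yᵀ) := by
  funext ij
  rw [mulVec, dotProduct, Fintype.sum_prod_type]
  show ∑ k : Fin p, ∑ l : Fin p, (X ⊗ₖ Y) ij (k, l) * vecOp S (k, l)
      = vecOp (X * S * Yᵀ) ij
  have hterm : ∀ k l : Fin p,
      (X ⊗ₖ Y) ij (k, l) * vecOp S (k, l) = X ij.1 k * S k l * Y ij.2 l := by
    intro k l
    show X ij.1 k * Y ij.2 l * S k l = _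
    ring
  simp only [hterm]
  rw [Finset.sum_comm]
  show _ = (X * S * Yᵀ) ij.1 ij.2
  rw [mul_apply]
  apply Finset.sum_congr rfl
  intro l _
  rw [mul_apply, transpose_apply, Finset.sum_mul]

/-- the key linear map on vech space -/
noncomputable def Mm (X : Matrix (Fin p) (Fin p) ℝ) : Matrix (VechIdx p) (VechIdx p) ℝ :=
  ((dupMatrix p)ᵀ * dupMatrix p)⁻¹ * (dupMatrix p)ᵀ * (X ⊗ₖ X) * dupMatrix p

lemma Mm_mulVec (X S : Matrix (Fin p) (Fin p) ℝ) (hS : Sᵀ = S) :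
    Mm X *ᵥ vechOp S = vechOp (X * S * Xᵀ) := by
  have hsym : (X * S * Xᵀ)ᵀ = X * S * Xᵀ := by
    rw [transpose_mul, transpose_mul, transpose_transpose, hS, Matrix.mul_assoc]
  rw [Mm, ← mulVec_mulVec, G_mulVec S hS, ← mulVec_mulVec, kron_mulVec,
    H_mulVec _ hsym]

lemma ext_vech (P Q : Matrix (VechIdx p) (VechIdx p) ℝ)
    (h : ∀ S : Matrix (Fin p) (Fin p) ℝ, Sᵀ = S → P *ᵥ vechOp S = Q *ᵥ vechOp S) :
    P = Q := by
  ext k l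
  have := congrFun (h (symBasis l) (symBasis_sym l)) k
  rw [vechOp_symBasis] at this
  simpa using this

lemma Mm_mul (X Y : Matrix (Fin p) (Fin p) ℝ) : Mm X * Mm Y = Mm (X * Y) := by
  apply ext_vech
  intro S hS
  have hsym : (Y * S * Yᵀ)ᵀ = Y * S * Yᵀ := by
    rw [transpose_mul, transpose_mul, transpose_transpose, hS, Matrix.mul_assoc]
  rw [← mulVec_mulVec, Mm_mulVec Y S hS, Mm_mulVec X _ hsym, Mm_mulVec (X * Y) S hS]
  rw [transpose_mul]
  simp only [Matrix.mul_assoc]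

lemma Mm_one : Mm (1 : Matrix (Fin p) (Fin p) ℝ) = 1 := by
  apply ext_vech
  intro S hS
  rw [Mm_mulVec 1 S hS, Matrix.one_mul, transpose_one, Matrix.mul_one, Matrix.one_mulVec]

lemma Mm_diag (d : Fin p → ℝ) :
    Mm (diagonal d) = diagonal (fun k : VechIdx p => d k.1.1 * d k.1.2) := by
  apply ext_vech
  intro S hS
  rw [Mm_mulVec _ S hS, diagonal_transpose]
  funext k
  rw [mulVec, dotProduct]
  simp only [diagonal_apply, ite_mul, zero_mul]
  simp only [Finset.sum_ite_eq, Finset.mem_univ, if_true]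
  show (diagonal d * S * diagonal d) k.1.1 k.1.2 = d k.1.1 * d k.1.2 * S k.1.1 k.1.2
  rw [mul_diagonal, diagonal_mul]
  ring

section Counting

lemma filter_le_decomp :
    (Finset.univ.filter (fun ij : Fin p × Fin p => ij.2 ≤ ij.1))
      = (Finset.univ.filter (fun ij : Fin p × Fin p => ij.2 < ij.1))
        ∪ (Finset.univ.filter (fun ij : Fin p × Fin p => ij.2 = ij.1)) := by
  ext ij
  simp [le_iff_lt_or_eq]

lemma filter_disj :
    Disjoint (Finset.univ.filter (fun ij : Fin p × Fin p => ij.2 < ij.1))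
      (Finset.univ.filter (fun ij : Fin p × Fin p => ij.2 = ij.1)) := by
  rw [Finset.disjoint_left]
  intro ij h1 h2
  simp only [Finset.mem_filter, Finset.mem_univ, true_and] at h1 h2
  rw [h2] at h1
  exact lt_irrefl _ h1

lemma diag_filter_eq :
    (Finset.univ.filter (fun ij : Fin p × Fin p => ij.2 = ij.1))
      = Finset.univ.image (fun i : Fin p => (i, i)) := by
  ext ij
  simp only [Finset.mem_filter, Finset.mem_univ, true_and, Finset.mem_image]
  constructor
  · intro h
    exact ⟨ij.1, Prod.ext rfl h.symm⟩
  · rintro ⟨i, rfl⟩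
    rfl

lemma diag_inj : Function.Injective (fun i : Fin p => ((i, i) : Fin p × Fin p)) := by
  intro a b h
  exact (Prod.ext_iff.mp h).1

lemma two_mul_card : 2 * Fintype.card (VechIdx p) = p * p + p := by
  classical
  have hcard : Fintype.card (VechIdx p)
      = (Finset.univ.filter (fun ij : Fin p × Fin p => ij.2 ≤ ij.1)).card :=
    Fintype.card_subtype _
  have hswap : (Finset.univ.filter (fun ij : Fin p × Fin p => ¬ ij.2 ≤ ij.1)).card
      = (Finset.univ.filter (fun ij : Fin p × Fin p => ij.2 < ij.1)).card := by
    apply Finset.card_nbij' (fun ij => (ij.2, ij.1)) (fun ij => (ij.2, ij.1))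
    · intro a ha
      simp only [Finset.mem_coe, Finset.mem_filter, Finset.mem_univ, true_and, not_le] at ha ⊢
      exact ha
    · intro a ha
      simp only [Finset.mem_coe, Finset.mem_filter, Finset.mem_univ, true_and, not_le] at ha ⊢
      exact ha
    · intro a _; rfl
    · intro a _; rfl
  have hfull : (Finset.univ.filter (fun ij : Fin p × Fin p => ij.2 ≤ ij.1)).card
      + (Finset.univ.filter (fun ij : Fin p × Fin p => ¬ ij.2 ≤ ij.1)).card = p * p := by
    rw [Finset.card_filter_add_card_filter_not]
    simp
  have hdecomp : (Finset.univ.filter (fun ij : Fin p × Fin p => ij.2 ≤ ij.1)).card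
      = (Finset.univ.filter (fun ij : Fin p × Fin p => ij.2 < ij.1)).card
        + (Finset.univ.filter (fun ij : Fin p × Fin p => ij.2 = ij.1)).card := by
    rw [filter_le_decomp, Finset.card_union_of_disjoint filter_disj]
  have hdiag : (Finset.univ.filter (fun ij : Fin p × Fin p => ij.2 = ij.1)).card = p := by
    rw [diag_filter_eq, Finset.card_image_of_injective _ diag_inj, Finset.card_univ,
      Fintype.card_fin]
  omega

lemma cardV : Fintype.card (VechIdx p) = p * (p + 1) / 2 := by
  have h1 := two_mul_card (p := p)
  have h2 : p * (p + 1) = p * p + p := by ring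
  omega

lemma prod_vech (d : Fin p → ℝ) (hd : ∀ i, 0 < d i) :
    (∏ k : VechIdx p, (d k.1.1 * d k.1.2)) = (∏ i, d i) ^ (p + 1) := by
  classical
  set g : Fin p × Fin p → ℝ := fun ij => d ij.1 * d ij.2 with hg
  have hsub : (∏ k : VechIdx p, (d k.1.1 * d k.1.2))
      = ∏ ij ∈ Finset.univ.filter (fun ij : Fin p × Fin p => ij.2 ≤ ij.1), g ij := by
    rw [Finset.prod_subtype (p := fun ij : Fin p × Fin p => ij.2 ≤ ij.1)
      (Finset.univ.filter (fun ij : Fin p × Fin p => ij.2 ≤ ij.1)) (fun x => by simp) g]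
  set T := ∏ ij ∈ Finset.univ.filter (fun ij : Fin p × Fin p => ij.2 ≤ ij.1), g ij with hTd
  set L := ∏ ij ∈ Finset.univ.filter (fun ij : Fin p × Fin p => ij.2 < ij.1), g ij with hLd
  set P := ∏ i, d i with hPd
  have hswapP : (∏ ij ∈ Finset.univ.filter (fun ij : Fin p × Fin p => ¬ ij.2 ≤ ij.1), g ij)
      = L := by
    rw [hLd]
    apply Finset.prod_nbij' (fun ij => (ij.2, ij.1)) (fun ij => (ij.2, ij.1))
    · intro a ha
      simp only [Finset.mem_filter, Finset.mem_univ, true_and, not_le] at ha ⊢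
      exact ha
    · intro a ha
      simp only [Finset.mem_filter, Finset.mem_univ, true_and, not_le] at ha ⊢
      exact ha
    · intro a _; rfl
    · intro a _; rfl
    · intro a _
      show d a.1 * d a.2 = d a.2 * d a.1
      ring
  have hfullP : T * (∏ ij ∈ Finset.univ.filter (fun ij : Fin p × Fin p => ¬ ij.2 ≤ ij.1), g ij)
      = ∏ ij : Fin p × Fin p, g ij := by
    rw [hTd]
    exact Finset.prod_filter_mul_prod_filter_not Finset.univ _ g
  have hdecompP : T = L * ∏ ij ∈ Finset.univ.filter (fun ij : Fin p × Fin p => ij.2 = ij.1), g ij := by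
    rw [hTd, filter_le_decomp, Finset.prod_union filter_disj]
  have hdiagP : (∏ ij ∈ Finset.univ.filter (fun ij : Fin p × Fin p => ij.2 = ij.1), g ij)
      = P * P := by
    rw [diag_filter_eq, Finset.prod_image (fun a _ b _ h => diag_inj h)]
    rw [hPd, ← Finset.prod_mul_distrib]
  have hunivP : (∏ ij : Fin p × Fin p, g ij) = P ^ p * P ^ p := by
    rw [Fintype.prod_prod_type]
    have : ∀ i : Fin p, (∏ j : Fin p, g (i, j)) = d i ^ p * P := by
      intro i
      show (∏ j : Fin p, d i * d j) = d i ^ p * P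
      rw [Finset.prod_mul_distrib, Finset.prod_const, Finset.card_univ, Fintype.card_fin, hPd]
    simp only [this]
    rw [Finset.prod_mul_distrib, Finset.prod_const, Finset.card_univ, Fintype.card_fin,
      Finset.prod_pow, hPd]
  have hTpos : 0 < T := by
    rw [hTd]
    apply Finset.prod_pos
    intro ij _
    exact mul_pos (hd ij.1) (hd ij.2)
  have hPpos : 0 < P := Finset.prod_pos (fun i _ => hd i)
  have hTL : T * L = P ^ p * P ^ p := by
    rw [← hswapP, hfullP, hunivP]
  have hsq : T * T = P ^ (p + 1) * P ^ (p + 1) := by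
    calc T * T = T * (L * (P * P)) := by rw [← hdiagP, ← hdecompP]
      _ = (T * L) * (P * P) := by ring
      _ = (P ^ p * P ^ p) * (P * P) := by rw [hTL]
      _ = P ^ (p + 1) * P ^ (p + 1) := by ring
  have hBpos : 0 < P ^ (p + 1) := pow_pos hPpos _
  have : T = P ^ (p + 1) := by nlinarith [hsq, hTpos, hBpos]
  rw [hsub]
  exact this

end Counting

lemma det_Mm (A : Matrix (Fin p) (Fin p) ℝ) (hA : A.PosDef) :
    (Mm A).det = A.det ^ (p + 1) := by
  classical
  have hH : A.IsHermitian := hA.isHermitian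
  have hofReal : (RCLike.ofReal ∘ hH.eigenvalues : Fin p → ℝ) = hH.eigenvalues := by
    funext i
    simp
  have hspec : A = (hH.eigenvectorUnitary : Matrix (Fin p) (Fin p) ℝ)
      * diagonal hH.eigenvalues * star (hH.eigenvectorUnitary : Matrix (Fin p) (Fin p) ℝ) := by
    conv_lhs => rw [hH.spectral_theorem]
    rw [hofReal]
    rfl
  have hunit : (hH.eigenvectorUnitary : Matrix (Fin p) (Fin p) ℝ)
      * star (hH.eigenvectorUnitary : Matrix (Fin p) (Fin p) ℝ) = 1 :=
    mem_unitaryGroup_iff.mp (hH.eigenvectorUnitary).2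
  have hdetA : A.det = ∏ i, hH.eigenvalues i := by
    have := hH.det_eq_prod_eigenvalues
    simpa using this
  calc (Mm A).det
      = (Mm (hH.eigenvectorUnitary : Matrix (Fin p) (Fin p) ℝ) * Mm (diagonal hH.eigenvalues)
          * Mm (star (hH.eigenvectorUnitary : Matrix (Fin p) (Fin p) ℝ))).det := by
        rw [Mm_mul, Mm_mul, ← hspec]
    _ = (Mm (hH.eigenvectorUnitary : Matrix (Fin p) (Fin p) ℝ)).det
          * (Mm (diagonal hH.eigenvalues)).det
          * (Mm (star (hH.eigenvectorUnitary : Matrix (Fin p) (Fin p) ℝ))).det := by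
        rw [det_mul, det_mul]
    _ = ((Mm (hH.eigenvectorUnitary : Matrix (Fin p) (Fin p) ℝ)).det
          * (Mm (star (hH.eigenvectorUnitary : Matrix (Fin p) (Fin p) ℝ))).det)
          * (Mm (diagonal hH.eigenvalues)).det := by ring
    _ = (Mm (diagonal hH.eigenvalues)).det := by
        rw [← det_mul, Mm_mul, hunit, Mm_one, det_one, one_mul]
    _ = ∏ k : VechIdx p, (hH.eigenvalues k.1.1 * hH.eigenvalues k.1.2) := by
        rw [Mm_diag, det_diagonal]
    _ = (∏ i, hH.eigenvalues i) ^ (p + 1) :=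
        prod_vech hH.eigenvalues (fun i => hA.eigenvalues_pos i)
    _ = A.det ^ (p + 1) := by rw [hdetA]

lemma mul_vecMulVec {m c : Type*} (X : Matrix m (VechIdx p) ℝ) (u : VechIdx p → ℝ) (w : c → ℝ) :
    X * vecMulVec u w = vecMulVec (X *ᵥ u) w := by
  ext i k
  rw [mul_apply, vecMulVec_apply, mulVec, dotProduct, Finset.sum_mul]
  apply Finset.sum_congr rfl
  intro j _
  rw [vecMulVec_apply]
  ring

lemma mul_vecMulVec' {m c : Type*} (X : Matrix m (Fin p × Fin p) ℝ) (u : Fin p × Fin p → ℝ)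
    (w : c → ℝ) : X * vecMulVec u w = vecMulVec (X *ᵥ u) w := by
  ext i k
  rw [mul_apply, vecMulVec_apply, mulVec, dotProduct, Finset.sum_mul]
  apply Finset.sum_congr rfl
  intro j _
  rw [vecMulVec_apply]
  ring

lemma vecMulVec_mul {m c : Type*} (u : m → ℝ) (w : Fin p × Fin p → ℝ)
    (Y : Matrix (Fin p × Fin p) c ℝ) : vecMulVec u w * Y = vecMulVec u (Yᵀ *ᵥ w) := by
  ext i k
  rw [mul_apply, vecMulVec_apply, mulVec, dotProduct, Finset.mul_sum]
  apply Finset.sum_congr rfl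
  intro j _
  rw [vecMulVec_apply, transpose_apply]
  ring

lemma smul_vecMulVec {m c : Type*} (t : ℝ) (u : m → ℝ) (w : c → ℝ) :
    t • vecMulVec u w = vecMulVec (t • u) w := by
  ext i k
  simp only [Matrix.smul_apply, vecMulVec_apply, Pi.smul_apply, smul_eq_mul]
  ring

lemma det_one_add_vecMulVec {m : Type*} [Fintype m] [DecidableEq m] (u w : m → ℝ) :
    (1 + vecMulVec u w).det = 1 + w ⬝ᵥ u := by
  rw [vecMulVec_eq Unit, det_one_add_replicateCol_mul_replicateRow]

end HomoDetAux

open HomoDetAux in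
/-- The homoscedastic determinant identity used in Corollary 2 of the paper. -/
theorem homoscedastic_det_identity (p n : ℕ) (hp : 0 < p) (hn : 1 ≤ n)
    (Ψ V : Matrix (Fin p) (Fin p) ℝ) (hΨ : Ψ.PosDef) (hV : V.PosSemidef)
    (J₂ : ℝ) (hJ₂ : 0 < J₂)
    (c₁ c₂ : ℝ)
    (hc₁ : c₁ = J₂ / (2 * p * n + (p : ℝ) ^ 2 * (n : ℝ) ^ 2) - 1 / 4)
    (hc₂ : c₂ = 2 * n * J₂ / (2 * p * n + (p : ℝ) ^ 2 * (n : ℝ) ^ 2))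
    (hc₂_pos : 0 < c₂)
    (hpos : 0 < 1 + (1 / 2 - (2 * p * n + (p : ℝ) ^ 2 * (n : ℝ) ^ 2) / (8 * J₂)) * (p * n : ℝ))
    (A : Matrix (Fin p) (Fin p) ℝ) (hA : A = (Ψ + V)⁻¹) :
    (((dupMatrix p)ᵀ * dupMatrix p)⁻¹ * (dupMatrix p)ᵀ *
        (c₁ • vecMulVec (vecOp ((n : ℝ) • A)) (vecOp ((n : ℝ) • A)) + c₂ • (A ⊗ₖ A)) *
        dupMatrix p).det =
      c₂ ^ (p * (p + 1) / 2) * (1 + c₁ / c₂ * (n : ℝ) ^ 2 * p) * A.det ^ (p + 1) := by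
  classical
  have hPD : A.PosDef := by rw [hA]; exact (hΨ.add_posSemidef hV).inv
  have hAH : A.IsHermitian := hPD.isHermitian
  have hAs : Aᵀ = A := by
    have h := hAH
    rwa [Matrix.IsHermitian, conjTranspose_eq_transpose_of_trivial] at h
  have hdet : IsUnit A.det := hPD.det_pos.ne'.isUnit
  have hAinv : (A⁻¹)ᵀ = A⁻¹ := by rw [Matrix.transpose_nonsing_inv, hAs]
  have hc₂0 : c₂ ≠ 0 := ne_of_gt hc₂_pos
  have hnA : (((n : ℝ) • A))ᵀ = (n : ℝ) • A := by rw [transpose_smul, hAs]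
  have hnAi : (((n : ℝ) • A⁻¹))ᵀ = (n : ℝ) • A⁻¹ := by rw [transpose_smul, hAinv]
  have hMu : Mm A *ᵥ vechOp ((n : ℝ) • A⁻¹) = vechOp ((n : ℝ) • A) := by
    rw [Mm_mulVec A _ hnAi]
    rw [hAs, Matrix.mul_smul, Matrix.smul_mul, Matrix.mul_nonsing_inv _ hdet, Matrix.one_mul]
  have hkey : ((dupMatrix p)ᵀ * dupMatrix p)⁻¹ * (dupMatrix p)ᵀ *
        (c₁ • vecMulVec (vecOp ((n : ℝ) • A)) (vecOp ((n : ℝ) • A)) + c₂ • (A ⊗ₖ A)) *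
        dupMatrix p
      = c₂ • (Mm A * (1 + (c₁ / c₂) • vecMulVec (vechOp ((n : ℝ) • A⁻¹))
          ((dupMatrix p)ᵀ *ᵥ vecOp ((n : ℝ) • A)))) := by
    have h1 : ((dupMatrix p)ᵀ * dupMatrix p)⁻¹ * (dupMatrix p)ᵀ *
          vecMulVec (vecOp ((n : ℝ) • A)) (vecOp ((n : ℝ) • A)) * dupMatrix p
        = vecMulVec (vechOp ((n : ℝ) • A)) ((dupMatrix p)ᵀ *ᵥ vecOp ((n : ℝ) • A)) := by
      rw [mul_vecMulVec', vecMulVec_mul, H_mulVec _ hnA]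
    have hdistrib : ((dupMatrix p)ᵀ * dupMatrix p)⁻¹ * (dupMatrix p)ᵀ *
          (c₁ • vecMulVec (vecOp ((n : ℝ) • A)) (vecOp ((n : ℝ) • A)) + c₂ • (A ⊗ₖ A)) *
          dupMatrix p
        = c₁ • (((dupMatrix p)ᵀ * dupMatrix p)⁻¹ * (dupMatrix p)ᵀ *
            vecMulVec (vecOp ((n : ℝ) • A)) (vecOp ((n : ℝ) • A)) * dupMatrix p)
          + c₂ • (((dupMatrix p)ᵀ * dupMatrix p)⁻¹ * (dupMatrix p)ᵀ * (A ⊗ₖ A) * dupMatrix p) := by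
      rw [Matrix.mul_add, Matrix.add_mul, Matrix.mul_smul, Matrix.smul_mul,
        Matrix.mul_smul, Matrix.smul_mul]
    rw [hdistrib, h1]
    have hMmdef : ((dupMatrix p)ᵀ * dupMatrix p)⁻¹ * (dupMatrix p)ᵀ * (A ⊗ₖ A) * dupMatrix p
        = Mm A := rfl
    rw [hMmdef]
    rw [Matrix.mul_add, Matrix.mul_one, smul_add]
    rw [Matrix.mul_smul, mul_vecMulVec, hMu]
    have hscal : c₂ • ((c₁ / c₂) • vecMulVec (vechOp ((n : ℝ) • A))
          ((dupMatrix p)ᵀ *ᵥ vecOp ((n : ℝ) • A)))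
        = c₁ • vecMulVec (vechOp ((n : ℝ) • A)) ((dupMatrix p)ᵀ *ᵥ vecOp ((n : ℝ) • A)) := by
      rw [smul_smul]
      congr 1
      field_simp
    rw [hscal, add_comm]
  rw [hkey, det_smul, det_mul, det_Mm A hPD]
  have hbu : ((dupMatrix p)ᵀ *ᵥ vecOp ((n : ℝ) • A)) ⬝ᵥ vechOp ((n : ℝ) • A⁻¹)
      = (n : ℝ) ^ 2 * p := by
    rw [mulVec_transpose, ← dotProduct_mulVec, G_mulVec _ hnAi]
    have hterm : ∀ ij : Fin p × Fin p,
        vecOp ((n : ℝ) • A) ij * vecOp ((n : ℝ) • A⁻¹) ij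
          = (n : ℝ) ^ 2 * (A ij.1 ij.2 * A⁻¹ ij.1 ij.2) := by
      intro ij
      simp only [vecOp, Matrix.smul_apply, smul_eq_mul]
      ring
    rw [dotProduct]
    simp only [hterm]
    rw [← Finset.mul_sum]
    have htr : (∑ ij : Fin p × Fin p, A ij.1 ij.2 * A⁻¹ ij.1 ij.2) = (p : ℝ) := by
      rw [Fintype.sum_prod_type]
      have hrow : ∀ i : Fin p, (∑ j : Fin p, A i j * A⁻¹ i j) = (A * A⁻¹) i i := by
        intro i
        rw [mul_apply]
        apply Finset.sum_congr rfl
        intro j _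
        congr 1
        exact (congrFun (congrFun hAinv i) j).symm
      simp only [hrow]
      rw [Matrix.mul_nonsing_inv _ hdet]
      simp [Matrix.one_apply]
    rw [htr]
  have hdet1 : (1 + (c₁ / c₂) • vecMulVec (vechOp ((n : ℝ) • A⁻¹))
        ((dupMatrix p)ᵀ *ᵥ vecOp ((n : ℝ) • A))).det
      = 1 + c₁ / c₂ * ((n : ℝ) ^ 2 * p) := by
    rw [smul_vecMulVec, det_one_add_vecMulVec]
    congr 1
    rw [dotProduct_smul, hbu]
    rw [smul_eq_mul]
  rw [hdet1, cardV]
  ring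
end

section
/- For the multivariate t density generator f(u) = K(1+u/d)^{−(pn+d)/2} on ℝ^{pn} (with d > 0 degrees of freedom and K the normalizing constant), the quantity J₂ = E[(R²)²(f′(R²)/f(R²))²], where R² = Z⊤Z and Z has density z ↦ f(z⊤z), equals pn(pn+2)(pn+d)/(4(pn+2+d)); consequently J₂/(2pn+p²n²) − 1/4 = (1/4)((pn+d)/(pn+d+2) − 1) < 0. -/
open MeasureTheory Real Set

lemma real_beta_Ioo (a b : ℝ) (ha : 0 < a) (hb : 0 < b) :
    ∫ x in Ioo (0:ℝ) 1, x ^ (a-1) * (1-x) ^ (b-1)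
      = Real.Gamma a * Real.Gamma b / Real.Gamma (a+b) := by
  have hab : (0:ℝ) < a + b := by linarith
  have h := Complex.Gamma_mul_Gamma_eq_betaIntegral (s := (a:ℂ)) (t := (b:ℂ))
    (by simpa using ha) (by simpa using hb)
  have hbeta : Complex.betaIntegral a b =
      ((∫ x in (0:ℝ)..1, x ^ (a-1) * (1-x) ^ (b-1) : ℝ) : ℂ) := by
    rw [Complex.betaIntegral, ← intervalIntegral.integral_ofReal]
    refine intervalIntegral.integral_congr fun x hx => ?_
    rw [Set.uIcc_of_le zero_le_one] at hx
    have h1 : (0:ℝ) ≤ x := hx.1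
    have h2 : (0:ℝ) ≤ 1 - x := by linarith [hx.2]
    rw [Complex.ofReal_mul, Complex.ofReal_cpow h1, Complex.ofReal_cpow h2]
    push_cast
    ring
  have hGne : Complex.Gamma ((a:ℂ) + b) ≠ 0 := by
    apply Complex.Gamma_ne_zero_of_re_pos
    simpa using hab
  have hb2 : ((∫ x in (0:ℝ)..1, x ^ (a-1) * (1-x) ^ (b-1) : ℝ) : ℂ)
      = Complex.Gamma a * Complex.Gamma b / Complex.Gamma ((a:ℂ)+b) := by
    rw [← hbeta, eq_div_iff hGne, mul_comm, ← h]
  rw [← Complex.ofReal_add, Complex.Gamma_ofReal, Complex.Gamma_ofReal,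
    Complex.Gamma_ofReal] at hb2
  have : (∫ x in (0:ℝ)..1, x ^ (a-1) * (1-x) ^ (b-1) : ℝ)
      = Real.Gamma a * Real.Gamma b / Real.Gamma (a+b) := by
    exact_mod_cast hb2
  rw [← this, intervalIntegral.integral_of_le zero_le_one,
    MeasureTheory.integral_Ioc_eq_integral_Ioo]

lemma real_beta_Ioi (a b : ℝ) (ha : 0 < a) (hb : 0 < b) :
    ∫ t in Ioi (0:ℝ), t ^ (a-1) * (1+t) ^ (-(a+b))
      = Real.Gamma a * Real.Gamma b / Real.Gamma (a+b) := by
  have himg : (fun x : ℝ => x / (1 - x)) '' Ioo 0 1 = Ioi 0 := by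
    ext y
    constructor
    · rintro ⟨x, hx, rfl⟩
      exact div_pos hx.1 (by linarith [hx.2])
    · intro hy
      have hy0 : (0:ℝ) < y := hy
      have h1y : (0:ℝ) < 1 + y := by linarith
      refine ⟨y / (1 + y), ⟨div_pos hy0 h1y, (div_lt_one h1y).2 (by linarith)⟩, ?_⟩
      field_simp
      ring
  have hderiv : ∀ x ∈ Ioo (0:ℝ) 1,
      HasDerivWithinAt (fun x : ℝ => x / (1 - x)) (((1 - x)^2)⁻¹) (Ioo 0 1) x := by
    intro x hx
    have hne : (1:ℝ) - x ≠ 0 := sub_ne_zero.mpr hx.2.ne'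
    have : HasDerivAt (fun x : ℝ => x / (1 - x))
        ((1 * (1 - x) - x * (0 - 1)) / (1 - x)^2) x :=
      (hasDerivAt_id x).div ((hasDerivAt_const x (1:ℝ)).sub (hasDerivAt_id x)) hne
    have h' : ((1 - x)^2)⁻¹ = (1 * (1 - x) - x * (0 - 1)) / (1 - x)^2 := by ring
    rw [h']
    exact this.hasDerivWithinAt
  have hinj : Set.InjOn (fun x : ℝ => x / (1 - x)) (Ioo 0 1) := by
    intro x hx y hy hxy
    have hxne : (1:ℝ) - x ≠ 0 := sub_ne_zero.mpr hx.2.ne'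
    have hyne : (1:ℝ) - y ≠ 0 := sub_ne_zero.mpr hy.2.ne'
    rw [div_eq_div_iff hxne hyne] at hxy
    nlinarith [hxy]
  have := integral_image_eq_integral_abs_deriv_smul (f' := fun x => ((1-x)^2)⁻¹)
    measurableSet_Ioo hderiv hinj (fun t => t ^ (a-1) * (1+t) ^ (-(a+b)))
  rw [himg] at this
  rw [this, ← real_beta_Ioo a b ha hb]
  refine setIntegral_congr_fun measurableSet_Ioo fun x hx => ?_
  have hx0 : (0:ℝ) < x := hx.1
  have h1x : (0:ℝ) < 1 - x := by linarith [hx.2]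
  have e0 : |((1-x)^2)⁻¹| = ((1-x)^2)⁻¹ := abs_of_pos (by positivity)
  have e1 : (x / (1-x)) ^ (a-1) = x ^ (a-1) * (1-x) ^ (-(a-1)) := by
    rw [Real.div_rpow hx0.le h1x.le, Real.rpow_neg h1x.le, div_eq_mul_inv]
  have e2 : (1 + x / (1-x)) = (1-x)⁻¹ := by field_simp; ring
  have e3 : ((1-x)⁻¹) ^ (-(a+b)) = (1-x) ^ (a+b) := by
    rw [Real.inv_rpow h1x.le, ← Real.rpow_neg h1x.le, neg_neg]
  have e4 : ((1-x)^2)⁻¹ = (1-x) ^ (-(2:ℝ)) := by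
    rw [← Real.rpow_natCast (1-x) 2, ← Real.rpow_neg h1x.le]
    norm_num
  simp only [smul_eq_mul, e1, e2, e3]
  rw [e0, e4, show (1-x) ^ (-(2:ℝ)) * (x ^ (a-1) * (1-x) ^ (-(a-1)) * (1-x) ^ (a+b))
      = x ^ (a-1) * ((1-x) ^ (-(2:ℝ)) * (1-x) ^ (-(a-1)) * (1-x) ^ (a+b)) by ring,
    ← Real.rpow_add h1x, ← Real.rpow_add h1x]
  congr 1
  ring

lemma radial_reduce (m : ℕ) (hm : 0 < m) (φ : ℝ → ℝ) :
    ∫ z : Fin m → ℝ, φ (∑ i, z i ^ 2)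
      = (m : ℝ) * (Real.sqrt π ^ m / Real.Gamma (m / 2 + 1)) *
        ∫ r in Ioi (0:ℝ), r ^ (m - 1) * φ (r ^ 2) := by
  haveI : Nonempty (Fin m) := ⟨⟨0, hm⟩⟩
  have e1 : ∫ z : Fin m → ℝ, φ (∑ i, z i ^ 2)
      = ∫ x : EuclideanSpace ℝ (Fin m), φ (‖x‖ ^ 2) := by
    rw [← (EuclideanSpace.volume_preserving_symm_measurableEquiv_toLp (Fin m)).integral_comp
      (MeasurableEquiv.toLp 2 (Fin m → ℝ)).symm.measurableEmbedding
      (fun z : Fin m → ℝ => φ (∑ i, z i ^ 2))]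
    congr 1
    ext x
    congr 1
    rw [EuclideanSpace.norm_eq, Real.sq_sqrt (Finset.sum_nonneg fun i _ => by positivity)]
    simp [sq_abs]
  haveI : Nontrivial (EuclideanSpace ℝ (Fin m)) :=
    ⟨0, EuclideanSpace.single ⟨0, hm⟩ 1, by
      intro h
      have := congrFun (congrArg (fun v : EuclideanSpace ℝ (Fin m) => (v : Fin m → ℝ)) h) ⟨0, hm⟩
      simp [EuclideanSpace.single_apply] at this⟩
  rw [e1, integral_fun_norm_addHaar volume (fun r => φ (r ^ 2))]
  have hdim : Module.finrank ℝ (EuclideanSpace ℝ (Fin m)) = m := finrank_euclideanSpace_fin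
  rw [hdim]
  have hball : (volume (Metric.ball (0 : EuclideanSpace ℝ (Fin m)) 1)).toReal
      = Real.sqrt π ^ m / Real.Gamma (m / 2 + 1) := by
    rw [EuclideanSpace.volume_ball]
    simp only [Fintype.card_fin, ENNReal.ofReal_one, one_pow, one_mul]
    rw [ENNReal.toReal_ofReal (by positivity)]
  rw [measureReal_def, hball, nsmul_eq_mul, smul_eq_mul, ← mul_assoc]
  simp only [smul_eq_mul]

lemma tJ2_sub_sq (m : ℕ) (hm : 0 < m) (φ : ℝ → ℝ) :
    ∫ r in Ioi (0:ℝ), r ^ (m - 1) * φ (r ^ 2)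
      = (1/2) * ∫ y in Ioi (0:ℝ), y ^ (((m:ℝ) - 2)/2) * φ y := by
  rw [← integral_comp_rpow_Ioi_of_pos
    (g := fun y => y ^ (((m:ℝ) - 2)/2) * φ y) zero_lt_two, ← MeasureTheory.integral_const_mul]
  refine setIntegral_congr_fun measurableSet_Ioi fun r hr => ?_
  have hr0 : (0:ℝ) < r := hr
  have h1 : r ^ ((2:ℝ)) = r ^ 2 := Real.rpow_two r
  have h2 : (r ^ (2:ℝ)) ^ (((m:ℝ) - 2)/2) = r ^ ((m:ℝ) - 2) := by
    rw [← Real.rpow_mul hr0.le]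
    congr 1
    ring
  have h3 : (r:ℝ) ^ (m - 1) = r ^ ((m:ℝ) - 1) := by
    rw [← Real.rpow_natCast r (m-1), Nat.cast_sub hm, Nat.cast_one]
  have h4 : r ^ ((2:ℝ) - 1) = r := by
    norm_num
  simp only [smul_eq_mul]
  rw [h2, h4, h1, h3, show (1:ℝ)/2 * (2 * r * (r ^ ((m:ℝ)-2) * φ (r^2)))
      = r * r ^ ((m:ℝ)-2) * φ (r^2) by ring,
    show ((m:ℝ) - 1) = 1 + ((m:ℝ) - 2) by ring, Real.rpow_add hr0, Real.rpow_one]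

lemma tJ2_sub_scale (d : ℝ) (hd : 0 < d) (ψ : ℝ → ℝ) :
    ∫ y in Ioi (0:ℝ), ψ y = d * ∫ t in Ioi (0:ℝ), ψ (d * t) := by
  rw [integral_comp_mul_left_Ioi ψ 0 hd, mul_zero, smul_eq_mul, ← mul_assoc,
    mul_inv_cancel₀ hd.ne', one_mul]

/-- The Fisher-information constant `J₂` for the multivariate `t` density generator. -/
theorem t_distribution_J2 (p n : ℕ) (hp : 0 < p) (hn : 0 < n) (d : ℝ) (hd : 0 < d)
    (K : ℝ)
    (hK : K = (π * d) ^ (-((p * n : ℕ) : ℝ) / 2) *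
        (Real.Gamma ((d + (p * n : ℕ)) / 2) / Real.Gamma (d / 2)))
    (f : ℝ → ℝ)
    (hf : f = fun u => K * (1 + u / d) ^ (-(((p * n : ℕ) : ℝ) + d) / 2))
    (J₂ : ℝ)
    (hJ₂ : J₂ = ∫ z : Fin (p * n) → ℝ,
        (∑ i, z i ^ 2) ^ 2 * (deriv f (∑ i, z i ^ 2) / f (∑ i, z i ^ 2)) ^ 2 *
          f (∑ i, z i ^ 2)) :
    J₂ = (p * n : ℝ) * ((p * n : ℝ) + 2) * ((p * n : ℝ) + d) /
        (4 * ((p * n : ℝ) + 2 + d)) ∧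
      J₂ / (2 * (p * n : ℝ) + (p : ℝ) ^ 2 * (n : ℝ) ^ 2) - 1 / 4 =
        1 / 4 * (((p * n : ℝ) + d) / ((p * n : ℝ) + d + 2) - 1) ∧
      J₂ / (2 * (p * n : ℝ) + (p : ℝ) ^ 2 * (n : ℝ) ^ 2) - 1 / 4 < 0 := by
  set M : ℕ := p * n with hMdef
  have hM : 0 < M := Nat.mul_pos hp hn
  have hM0 : (0:ℝ) < (M:ℝ) := by exact_mod_cast hM
  set e : ℝ := -(((M:ℕ):ℝ) + d) / 2 with he
  -- Gamma positivity facts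
  have hGd : 0 < Real.Gamma (d/2) := Real.Gamma_pos_of_pos (by positivity)
  have hGm : 0 < Real.Gamma ((M:ℝ)/2) := Real.Gamma_pos_of_pos (by positivity)
  have hGmd : 0 < Real.Gamma (((M:ℝ)+d)/2) := Real.Gamma_pos_of_pos (by positivity)
  have hK0 : 0 < K := by
    rw [hK]
    have h1 : 0 < Real.Gamma ((d + (M:ℝ))/2) := Real.Gamma_pos_of_pos (by positivity)
    have h2 : (0:ℝ) < π * d := by positivity
    positivity
  set φ : ℝ → ℝ := fun u => u^2 * (e/(d+u))^2 * (K * (1+u/d) ^ e) with hφ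
  -- Step A : pointwise identification of the integrand
  have hstep : ∀ z : Fin M → ℝ,
      (∑ i, z i ^ 2) ^ 2 * (deriv f (∑ i, z i ^ 2) / f (∑ i, z i ^ 2)) ^ 2 *
        f (∑ i, z i ^ 2) = φ (∑ i, z i ^ 2) := by
    intro z
    set S := ∑ i, z i ^ 2 with hS
    have hS0 : 0 ≤ S := Finset.sum_nonneg fun i _ => sq_nonneg _
    have hb : (0:ℝ) < 1 + S/d := by positivity
    have hder : HasDerivAt f (K * ((1:ℝ)/d * e * (1+S/d) ^ (e-1))) S := by
      have h1 : HasDerivAt (fun x:ℝ => 1 + x/d) ((1:ℝ)/d) S := by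
        simpa using ((hasDerivAt_id S).div_const d).const_add 1
      have h2 := h1.rpow_const (p := e) (Or.inl hb.ne')
      rw [hf]
      exact h2.const_mul K
    have hfS : f S = K * (1+S/d) ^ e := by rw [hf]
    have hratio : deriv f S / f S = e / (d + S) := by
      rw [hder.deriv, hfS, Real.rpow_sub hb, Real.rpow_one]
      have h1 : (1+S/d) ^ e ≠ 0 := (Real.rpow_pos_of_pos hb e).ne'
      have hdS : (0:ℝ) < d + S := by positivity
      field_simp
    rw [hratio, hφ, hfS]
  -- Step B : radial reduction and substitutions
  have hval : J₂ = (M:ℝ) * ((M:ℝ)+2) * ((M:ℝ)+d) / (4*((M:ℝ)+2+d)) := by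
    rw [hJ₂]
    simp only [hstep]
    rw [radial_reduce M hM φ, tJ2_sub_sq M hM φ,
      tJ2_sub_scale d hd (fun y => y ^ (((M:ℝ) - 2)/2) * φ y)]
    have hpt : ∀ t ∈ Ioi (0:ℝ),
        (d*t) ^ (((M:ℝ)-2)/2) * φ (d*t)
          = (d ^ (((M:ℝ)-2)/2) * K * e^2) *
            (t ^ ((((M:ℝ)+4)/2) - 1) * (1+t) ^ (-((((M:ℝ)+4)/2) + d/2))) := by
      intro t ht
      have ht0 : (0:ℝ) < t := ht
      have h1t : (0:ℝ) < 1 + t := by linarith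
      have hdt : d * t / d = t := by field_simp
      have h2 : (d*t) ^ (((M:ℝ)-2)/2)
          = d ^ (((M:ℝ)-2)/2) * t ^ (((M:ℝ)-2)/2) := Real.mul_rpow hd.le ht0.le
      have h4 : (1+t) ^ e = (1+t) ^ (-((((M:ℝ)+4)/2) + d/2)) * (1+t) ^ (2:ℝ) := by
        rw [← Real.rpow_add h1t]
        congr 1
        rw [he]
        ring
      have h5 : t ^ ((((M:ℝ)+4)/2) - 1) = t ^ (((M:ℝ)-2)/2) * t ^ (2:ℝ) := by
        rw [← Real.rpow_add ht0]
        congr 1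
        ring
      simp only [hφ]
      rw [hdt, h2, h4, h5, Real.rpow_two, Real.rpow_two]
      have hne : (0:ℝ) < d + d*t := by positivity
      field_simp
    rw [setIntegral_congr_fun measurableSet_Ioi hpt, MeasureTheory.integral_const_mul,
      real_beta_Ioi (((M:ℝ)+4)/2) (d/2) (by positivity) (by positivity)]
    -- Step C : numerology
    have hπ : Real.sqrt π ^ M = π ^ ((M:ℝ)/2) := by
      rw [Real.sqrt_eq_rpow, ← Real.rpow_natCast (π ^ ((1:ℝ)/2)) M, ← Real.rpow_mul pi_pos.le]
      congr 1
      ring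
    have hY : (0:ℝ) < (π*d) ^ (-((M:ℕ):ℝ)/2) := Real.rpow_pos_of_pos (by positivity) _
    have hZ : (0:ℝ) < d ^ (((M:ℝ)-2)/2) := Real.rpow_pos_of_pos hd _
    have hpow : Real.sqrt π ^ M * ((π*d) ^ (-((M:ℕ):ℝ)/2) * d ^ (((M:ℝ)-2)/2) * d) = 1 := by
      rw [hπ, Real.mul_rpow pi_pos.le hd.le]
      have h1 : π ^ ((M:ℝ)/2) * π ^ (-((M:ℕ):ℝ)/2) = 1 := by
        rw [← Real.rpow_add pi_pos, show ((M:ℝ)/2 + -((M:ℕ):ℝ)/2) = 0 by ring, Real.rpow_zero]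
      have h2 : d ^ (-((M:ℕ):ℝ)/2) * d ^ (((M:ℝ)-2)/2) * d = 1 := by
        rw [← Real.rpow_add hd, show (-((M:ℕ):ℝ)/2 + ((M:ℝ)-2)/2) = (-1:ℝ) by ring,
          Real.rpow_neg_one, inv_mul_cancel₀ hd.ne']
      calc π ^ ((M:ℝ)/2) * (π ^ (-((M:ℕ):ℝ)/2) * d ^ (-((M:ℕ):ℝ)/2) * d ^ (((M:ℝ)-2)/2) * d)
          = (π ^ ((M:ℝ)/2) * π ^ (-((M:ℕ):ℝ)/2)) *
            (d ^ (-((M:ℕ):ℝ)/2) * d ^ (((M:ℝ)-2)/2) * d) := by ring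
        _ = 1 := by rw [h1, h2, one_mul]
    have hX : Real.sqrt π ^ M = ((π*d) ^ (-((M:ℕ):ℝ)/2) * d ^ (((M:ℝ)-2)/2) * d)⁻¹ :=
      eq_inv_of_mul_eq_one_left hpow
    -- Gamma recurrences
    have hG1 : Real.Gamma ((M:ℝ)/2 + 1) = ((M:ℝ)/2) * Real.Gamma ((M:ℝ)/2) :=
      Real.Gamma_add_one (by positivity)
    have hGa : Real.Gamma (((M:ℝ)+4)/2)
        = ((M:ℝ)/2 + 1) * (((M:ℝ)/2) * Real.Gamma ((M:ℝ)/2)) := by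
      rw [show ((M:ℝ)+4)/2 = ((M:ℝ)/2 + 1) + 1 by ring, Real.Gamma_add_one (by positivity), hG1]
    have hGab : Real.Gamma ((((M:ℝ)+4)/2) + d/2)
        = (((M:ℝ)+d)/2 + 1) * ((((M:ℝ)+d)/2) * Real.Gamma (((M:ℝ)+d)/2)) := by
      rw [show (((M:ℝ)+4)/2) + d/2 = ((((M:ℝ)+d)/2 + 1) + 1) by ring,
        Real.Gamma_add_one (by positivity), Real.Gamma_add_one (by positivity)]
    have hGdm : Real.Gamma ((d + (M:ℝ))/2) = Real.Gamma (((M:ℝ)+d)/2) := by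
      rw [add_comm d ((M:ℝ))]
    rw [hK, hGdm, hG1, hGa, hGab, hX, he]
    have hMd2 : (0:ℝ) < (M:ℝ) + d + 2 := by positivity
    have hMd : (0:ℝ) < (M:ℝ) + d := by positivity
    field_simp
    ring
  -- conclude
  have hcast : ((M:ℕ):ℝ) = (p:ℝ) * (n:ℝ) := by rw [hMdef]; push_cast; ring
  have hpn1 : (1:ℝ) ≤ (p:ℝ) * (n:ℝ) := by
    rw [← hcast]
    exact_mod_cast hM
  have h2 : J₂ / (2 * ((p:ℝ) * (n:ℝ)) + (p:ℝ)^2 * (n:ℝ)^2) - 1/4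
      = 1/4 * ((((p:ℝ)*(n:ℝ)) + d) / (((p:ℝ)*(n:ℝ)) + d + 2) - 1) := by
    rw [hval, hcast]
    have hA : (0:ℝ) < (p:ℝ)*(n:ℝ) := by linarith
    have hB : (0:ℝ) < (p:ℝ)*(n:ℝ) + 2 := by linarith
    have hC : (0:ℝ) < (p:ℝ)*(n:ℝ) + d + 2 := by linarith
    have hD : (0:ℝ) < (p:ℝ)*(n:ℝ) + 2 + d := by linarith
    field_simp
    ring
  refine ⟨by rw [hval, hcast], h2, ?_⟩
  rw [h2]
  ·
    have hE : (0:ℝ) < (p:ℝ)*(n:ℝ) + d + 2 := by linarith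
    have : ((p:ℝ)*(n:ℝ) + d) / ((p:ℝ)*(n:ℝ) + d + 2) < 1 := by
      rw [div_lt_one hE]
      linarith
    linarith
end
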